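/- Let G ↷ B be a minimal convergence action on a compact Hausdorff space, let a, b, c ∈ B with a ≠ b, and let g_n ∈ G be a sequence with g_n a → c and g_n b → c. Then for any atomless Borel probability measure κ on B, the pushforwards g_n κ converge weakly to the Dirac measure δ_c. -/

import Mathlib

open MeasureTheory Filter Topology

/-- A convergence action: for every sequence in `G` leaving every finite set, there are a
subsequence and points `p, c` such that `g_{φ n} • x → c` for every `x ≠ p`. -/
def ConvergenceAction (G X : Type*) [Group G] [TopologicalSpace X] [MulAction G X] : Prop :=
  ∀ g : ℕ → G, (∀ F : Finset G, ∀ᶠ n in atTop, g n ∉ F) →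
    ∃ (φ : ℕ → ℕ) (p c : X), StrictMono φ ∧
      ∀ x : X, x ≠ p → Tendsto (fun n => g (φ n) • x) atTop (𝓝 c)

/-- for a minimal convergence action, if `g_n a → c` and `g_n b → c` with
`a ≠ b`, then `g_n κ → δ_c` weakly for every atomless Borel probability measure `κ`. -/
theorem stmt11 {G B : Type*} [Group G] [Countable G]
    [TopologicalSpace B] [CompactSpace B] [T2Space B]
    [MeasurableSpace B] [BorelSpace B]
    [MulAction G B] (hcont : ∀ g : G, Continuous fun x : B => g • x)
    (hconv : ConvergenceAction G B)
    (hmin : ∀ x : B, Dense (MulAction.orbit G x))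
    (a b c : B) (hab : a ≠ b) (g : ℕ → G)
    (ha : Tendsto (fun n => g n • a) atTop (𝓝 c))
    (hb : Tendsto (fun n => g n • b) atTop (𝓝 c))
    (κ : Measure B) [IsProbabilityMeasure κ] [NullSingletonClass κ] :
    ∀ f : C(B, ℝ), Tendsto (fun n => ∫ x, f (g n • x) ∂κ) atTop (𝓝 (f c)) := by
  classical
  intro f
  -- Step 1: each value of `g` occurs only finitely often
  have hne : ∀ h : G, ∀ᶠ n in atTop, g n ≠ h := by
    intro h
    by_contra hcontra
    rw [Filter.not_eventually] at hcontra
    simp only [not_not] at hcontra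
    obtain ⟨φ, hφ, hgφ⟩ := Filter.extraction_of_frequently_atTop hcontra
    have h1 : Tendsto (fun n => g (φ n) • a) atTop (𝓝 c) := ha.comp hφ.tendsto_atTop
    have h2 : Tendsto (fun n => g (φ n) • b) atTop (𝓝 c) := hb.comp hφ.tendsto_atTop
    simp only [hgφ] at h1 h2
    have e1 : h • a = c := tendsto_nhds_unique tendsto_const_nhds h1
    have e2 : h • b = c := tendsto_nhds_unique tendsto_const_nhds h2
    exact hab (MulAction.injective h (e1.trans e2.symm))
  have hfin : ∀ F : Finset G, ∀ᶠ n in atTop, g n ∉ F := by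
    intro F
    have : ∀ᶠ n in atTop, ∀ h ∈ F, g n ≠ h :=
      (Filter.eventually_all_finite F.finite_toSet).2 fun h _ => hne h
    exact this.mono fun n hn hmem => hn _ hmem rfl
  -- Step 2: every subsequence has a further subsequence along which the integral converges
  apply Filter.tendsto_of_subseq_tendsto
  intro ns hns
  obtain ⟨φ, p, c', hφ, hconv'⟩ :=
    hconv (fun n => g (ns n)) (fun F => hns.eventually (hfin F))
  -- a good point d ≠ p with g n • d → c
  set d : B := if a = p then b else a with hd_def
  have hd : d ≠ p := by
    by_cases hap : a = p
    · simp only [hd_def, if_pos hap]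
      exact fun hbp => hab (hap.trans hbp.symm)
    · simpa only [hd_def, if_neg hap] using hap
  have hdc : Tendsto (fun n => g n • d) atTop (𝓝 c) := by
    by_cases hap : a = p
    · simpa only [hd_def, if_pos hap] using hb
    · simpa only [hd_def, if_neg hap] using ha
  have hcc : c' = c :=
    tendsto_nhds_unique (hconv' d hd) (hdc.comp (hns.comp hφ.tendsto_atTop))
  subst hcc
  refine ⟨φ, ?_⟩
  have hconst : f c' = ∫ _, f c' ∂κ := by simp
  rw [hconst]
  apply tendsto_integral_of_dominated_convergence (fun _ => ‖f‖)
  · intro n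
    exact ((f.continuous.comp (hcont _)).aestronglyMeasurable)
  · exact integrable_const _
  · intro n
    exact Eventually.of_forall fun x => f.norm_coe_le_norm _
  · have hp : ({p} : Set B)ᶜ ∈ ae κ := compl_mem_ae_iff.2 (measure_singleton p)
    filter_upwards [hp] with x hx
    exact (f.continuous.tendsto c').comp (hconv' x hx)
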